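/- With the operator (𝒰f)(x) = ∫ (f(x) − f(y))/(x − y) β(dy), for every n ≥ 0 and x ∈ (−2,2): (𝒰ψ_n)(x) = (2 − 2·φ_{n+1}(x))/(4 − x²) when n is odd, and (𝒰ψ_n)(x) = (x − 2·φ_{n+1}(x))/(4 − x²) when n is even. -/

import Mathlib

open MeasureTheory Real Polynomial Polynomial.Chebyshev
open scoped ENNReal NNReal

/-- The arcsine law on `[-2,2]`. -/
noncomputable def arcsineLaw : Measure ℝ :=
  (volume.restrict (Set.Icc (-2 : ℝ) 2)).withDensity
    fun y => ENNReal.ofReal (1 / (π * Real.sqrt (4 - y ^ 2)))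

private lemma cos_image_Ioo :
    (fun θ : ℝ => 2 * Real.cos θ) '' (Set.Ioo 0 π) = Set.Ioo (-2 : ℝ) 2 := by
  ext y
  constructor
  · rintro ⟨θ, hθ, rfl⟩
    have h1 : Real.cos θ < Real.cos 0 :=
      Real.strictAntiOn_cos ⟨le_refl _, pi_pos.le⟩ ⟨hθ.1.le, hθ.2.le⟩ hθ.1
    have h2 : Real.cos π < Real.cos θ :=
      Real.strictAntiOn_cos ⟨hθ.1.le, hθ.2.le⟩ ⟨pi_pos.le, le_refl _⟩ hθ.2
    rw [Real.cos_zero] at h1; rw [Real.cos_pi] at h2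
    exact ⟨by simp only []; linarith, by simp only []; linarith⟩
  · rintro ⟨h1, h2⟩
    refine ⟨Real.arccos (y / 2), ⟨?_, ?_⟩, ?_⟩
    · exact Real.arccos_pos.2 (by linarith)
    · refine lt_of_le_of_ne (Real.arccos_le_pi _) fun h => ?_
      have := Real.arccos_eq_pi.1 h
      linarith
    · show 2 * Real.cos (Real.arccos (y / 2)) = y
      rw [Real.cos_arccos (by linarith) (by linarith)]; ring

private lemma arcsine_transfer (f : ℝ → ℝ) :
    ∫ y, f y ∂arcsineLaw = ∫ θ in (0:ℝ)..π, (1 / π) * f (2 * Real.cos θ) := by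
  have hd : Measurable fun y : ℝ => (1 / (π * Real.sqrt (4 - y ^ 2))).toNNReal := by
    apply Measurable.real_toNNReal
    exact measurable_const.div
      ((continuous_const.mul (Real.continuous_sqrt.comp (by continuity))).measurable)
  have h0 : arcsineLaw = (volume.restrict (Set.Icc (-2 : ℝ) 2)).withDensity
      (fun y => (((1 / (π * Real.sqrt (4 - y ^ 2))).toNNReal : ℝ≥0) : ℝ≥0∞)) := rfl
  rw [h0, integral_withDensity_eq_integral_smul hd, integral_Icc_eq_integral_Ioo, ← cos_image_Ioo,
    integral_image_eq_integral_abs_deriv_smul (f' := fun θ => 2 * (-Real.sin θ))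
      measurableSet_Ioo
      (fun θ _ => ((Real.hasDerivAt_cos θ).const_mul 2).hasDerivWithinAt)
      (fun a ha b hb h => Real.injOn_cos ⟨ha.1.le, ha.2.le⟩ ⟨hb.1.le, hb.2.le⟩ (by
        linarith [h]))]
  rw [intervalIntegral.integral_of_le pi_pos.le, integral_Ioc_eq_integral_Ioo]
  refine setIntegral_congr_fun measurableSet_Ioo fun θ hθ => ?_
  have hs : 0 < Real.sin θ := Real.sin_pos_of_pos_of_lt_pi hθ.1 hθ.2
  have h4 : 4 - (2 * Real.cos θ) ^ 2 = (2 * Real.sin θ) ^ 2 := by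
    have := Real.sin_sq_add_cos_sq θ; nlinarith
  show |2 * (-Real.sin θ)| •
      ((1 / (π * Real.sqrt (4 - (2 * Real.cos θ) ^ 2))).toNNReal • f (2 * Real.cos θ)) = _
  rw [h4, Real.sqrt_sq (by linarith)]
  have habs : |2 * (-Real.sin θ)| = 2 * Real.sin θ := by
    rw [abs_of_nonpos (by nlinarith)]; ring
  rw [NNReal.smul_def, Real.coe_toNNReal _ (by positivity), habs, smul_eq_mul]
  have hπ : π ≠ 0 := pi_ne_zero
  field_simp
  rw [smul_eq_mul, ← mul_assoc, mul_one_div_cancel (by positivity), one_mul]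

private lemma cos_moment (k : ℤ) (hk : k ≠ 0) :
    ∫ θ in (0:ℝ)..π, Real.cos ((k : ℝ) * θ) = 0 := by
  have hk' : (k : ℝ) ≠ 0 := Int.cast_ne_zero.2 hk
  rw [intervalIntegral.integral_comp_mul_left Real.cos hk', integral_cos]
  simp [Real.sin_int_mul_pi]

private lemma poly_rec (k : ℤ) : U ℝ (k + 2) = U ℝ k + 2 * T ℝ (k + 2) := by
  have h1 := U_eq_X_mul_U_add_T ℝ (k + 1)
  have h2 := U_add_two ℝ k
  rw [show k + 1 + 1 = k + 2 by ring] at h1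
  linear_combination 2 * h1 - h2

private lemma U_moment (m : ℕ) :
    ∫ θ in (0:ℝ)..π, (U ℝ (m : ℤ)).eval (Real.cos θ) = if Even m then π else 0 := by
  induction m using Nat.twoStepInduction with
  | zero => simp
  | one =>
    simp only [Nat.cast_one, U_one, eval_mul, eval_ofNat, eval_X]
    rw [intervalIntegral.integral_const_mul, integral_cos]
    simp
  | more m ih _ =>
    have hc : ((m + 2 : ℕ) : ℤ) = (m : ℤ) + 2 := by push_cast; ring
    rw [hc, poly_rec]
    simp only [eval_add, eval_mul, eval_ofNat, T_real_cos]
    have i1 : IntervalIntegrable (fun θ => (U ℝ (m : ℤ)).eval (Real.cos θ)) volume 0 π :=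
      ((Polynomial.continuous _).comp Real.continuous_cos).intervalIntegrable _ _
    have i2 : IntervalIntegrable (fun θ : ℝ => 2 * Real.cos ((((m:ℤ) + 2 : ℤ) : ℝ) * θ))
        volume 0 π :=
      (continuous_const.mul (Real.continuous_cos.comp (by continuity))).intervalIntegrable _ _
    rw [intervalIntegral.integral_add i1 i2]
    rw [intervalIntegral.integral_const_mul, cos_moment ((m:ℤ)+2) (by omega), ih]
    simp [Nat.even_add_one, Nat.not_even_iff_odd, Nat.odd_add_one]

private lemma aux_prod (a b u v : ℝ) :
    (2 * Real.cos a - 2 * Real.cos b) * (Real.sin u * Real.sin v) =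
      (Real.sin (u + a) * Real.sin v - Real.sin u * Real.sin (v + b)) +
      (Real.sin (u - a) * Real.sin v - Real.sin u * Real.sin (v - b)) := by
  rw [Real.sin_add, Real.sin_sub, Real.sin_add, Real.sin_sub]
  ring

private lemma sin_telescope (α b : ℝ) (n : ℕ) :
    (2 * Real.cos α - 2 * Real.cos b) *
      ∑ k ∈ Finset.range n, Real.sin (((k : ℝ) + 1) * α) * Real.sin (((n : ℝ) - k) * b) =
    Real.sin b * Real.sin (((n : ℝ) + 1) * α) - Real.sin α * Real.sin (((n : ℝ) + 1) * b) := by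
  set F : ℕ → ℝ := fun k => Real.sin (((k : ℝ) + 1) * α) * Real.sin (((n : ℝ) + 1 - k) * b)
    with hF
  set G : ℕ → ℝ := fun k => Real.sin ((k : ℝ) * α) * Real.sin (((n : ℝ) - k) * b) with hG
  have key : ∀ k ∈ Finset.range n,
      (2 * Real.cos α - 2 * Real.cos b) *
        (Real.sin (((k : ℝ) + 1) * α) * Real.sin (((n : ℝ) - k) * b)) =
      (F (k + 1) - F k) + (G k - G (k + 1)) := by
    intro k hk
    have h := aux_prod α b (((k : ℝ) + 1) * α) (((n : ℝ) - k) * b)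
    rw [h, hF, hG]
    push_cast
    rw [show ((k:ℝ) + 1) * α + α = ((k:ℝ) + 1 + 1) * α by ring,
      show ((n:ℝ) - k) * b + b = ((n:ℝ) + 1 - k) * b by ring,
      show ((k:ℝ) + 1) * α - α = (k:ℝ) * α by ring,
      show ((n:ℝ) - k) * b - b = ((n:ℝ) - (k + 1)) * b by ring,
      show ((n:ℝ) + 1 - (k + 1)) * b = ((n:ℝ) - k) * b by ring]
  rw [Finset.mul_sum, Finset.sum_congr rfl key, Finset.sum_add_distrib,
    Finset.sum_range_sub F, Finset.sum_range_sub' G]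
  rw [hF, hG]
  push_cast
  rw [show ((n:ℝ) + 1 - n) * b = b by ring, show ((0:ℝ) + 1) * α = α by ring,
    show ((n:ℝ) - n) * b = 0 * b by ring]
  simp
  ring_nf

private lemma div_diff (n : ℕ) {a b : ℝ} (ha : a ∈ Set.Ioo (-1:ℝ) 1) (hb : b ∈ Set.Ioo (-1:ℝ) 1) :
    (U ℝ (n : ℤ)).eval a - (U ℝ (n : ℤ)).eval b =
      (2 * (a - b)) * ∑ k ∈ Finset.range n,
        (U ℝ (k : ℤ)).eval a * (U ℝ ((n : ℤ) - 1 - (k : ℤ))).eval b := by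
  set α := Real.arccos a with hα
  set β := Real.arccos b with hβ
  have hca : Real.cos α = a := Real.cos_arccos ha.1.le ha.2.le
  have hcb : Real.cos β = b := Real.cos_arccos hb.1.le hb.2.le
  have hαpi : α < π := lt_of_le_of_ne (Real.arccos_le_pi a)
    fun h => by have := Real.arccos_eq_pi.1 h; linarith [ha.1]
  have hβpi : β < π := lt_of_le_of_ne (Real.arccos_le_pi b)
    fun h => by have := Real.arccos_eq_pi.1 h; linarith [hb.1]
  have hsa : 0 < Real.sin α :=
    Real.sin_pos_of_pos_of_lt_pi (Real.arccos_pos.2 ha.2) hαpi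
  have hsb : 0 < Real.sin β :=
    Real.sin_pos_of_pos_of_lt_pi (Real.arccos_pos.2 hb.2) hβpi
  have e1 : ∀ k : ℕ, Real.sin (((k : ℝ) + 1) * α) = (U ℝ (k : ℤ)).eval a * Real.sin α := by
    intro k
    have h := U_real_cos α (k : ℤ)
    rw [hca] at h
    push_cast at h
    exact h.symm
  have e2 : ∀ k ∈ Finset.range n,
      Real.sin (((n : ℝ) - k) * β) = (U ℝ ((n : ℤ) - 1 - (k : ℤ))).eval b * Real.sin β := by
    intro k _
    have h := U_real_cos β ((n : ℤ) - 1 - (k : ℤ))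
    rw [hcb] at h
    push_cast at h
    rw [show (n : ℝ) - 1 - (k : ℝ) + 1 = (n : ℝ) - k by ring] at h
    exact h.symm
  have e3 : Real.sin (((n : ℝ) + 1) * α) = (U ℝ (n : ℤ)).eval a * Real.sin α := e1 n
  have e4 : Real.sin (((n : ℝ) + 1) * β) = (U ℝ (n : ℤ)).eval b * Real.sin β := by
    have h := U_real_cos β (n : ℤ)
    rw [hcb] at h
    push_cast at h
    exact h.symm
  have key := sin_telescope α β n
  rw [Finset.sum_congr rfl (fun k hk => by rw [e1 k, e2 k hk]), e3, e4, hca, hcb] at key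
  have hsum : ∑ k ∈ Finset.range n,
      (U ℝ (k : ℤ)).eval a * Real.sin α * ((U ℝ ((n : ℤ) - 1 - (k : ℤ))).eval b * Real.sin β) =
      (∑ k ∈ Finset.range n,
        (U ℝ (k : ℤ)).eval a * (U ℝ ((n : ℤ) - 1 - (k : ℤ))).eval b) * (Real.sin α * Real.sin β) := by
    rw [Finset.sum_mul]
    exact Finset.sum_congr rfl fun k _ => by ring
  rw [hsum] at key
  have hne : Real.sin α * Real.sin β ≠ 0 := by positivity
  apply mul_right_cancel₀ hne
  linear_combination -key

private lemma closed_trig (α : ℝ) (n : ℕ) :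
    4 * Real.sin α * ∑ k ∈ Finset.range n,
        (if Even (n - 1 - k) then Real.sin (((k : ℝ) + 1) * α) else 0) =
      (if Odd n then 2 else 2 * Real.cos α) - 2 * Real.cos (((n : ℝ) + 1) * α) := by
  induction n using Nat.twoStepInduction with
  | zero => simp
  | one =>
    simp only [Finset.sum_range_one, Nat.cast_zero]
    norm_num
    rw [Real.cos_two_mul]
    nlinarith [Real.sin_sq_add_cos_sq α]
  | more m ih _ =>
    rw [Finset.sum_range_succ, Finset.sum_range_succ]
    have hcond : ∀ k ∈ Finset.range m,
        (if Even (m + 2 - 1 - k) then Real.sin (((k : ℝ) + 1) * α) else 0) =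
        (if Even (m - 1 - k) then Real.sin (((k : ℝ) + 1) * α) else 0) := by
      intro k hk
      have hk' := Finset.mem_range.1 hk
      rw [show m + 2 - 1 - k = (m - 1 - k) + 2 by omega]
      simp only [Nat.even_add_one, not_not]
    rw [Finset.sum_congr rfl hcond]
    have h1 : m + 2 - 1 - (m + 1) = 0 := by omega
    have h2 : m + 2 - 1 - m = 1 := by omega
    rw [h1, h2]
    simp only [Even.zero, if_true, Nat.not_even_one, if_false]
    have hodd : Odd (m + 2) ↔ Odd m := by
      rw [Nat.odd_add_one, Nat.odd_add_one, not_not]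
    have hkey : 4 * Real.sin α * Real.sin (((m : ℝ) + 1 + 1) * α) =
        2 * Real.cos (((m : ℝ) + 1) * α) - 2 * Real.cos (((m : ℝ) + 2 + 1) * α) := by
      rw [show ((m : ℝ) + 1) * α = ((m : ℝ) + 2) * α - α by ring,
        show ((m : ℝ) + 2 + 1) * α = ((m : ℝ) + 2) * α + α by ring,
        show ((m : ℝ) + 1 + 1) * α = ((m : ℝ) + 2) * α by ring,
        Real.cos_sub, Real.cos_add]
      ring
    push_cast
    rw [mul_add, add_zero, ih]
    by_cases hm : Odd m
    · rw [if_pos hm, if_pos (hodd.2 hm)]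
      linarith [hkey]
    · rw [if_neg hm, if_neg (by rw [hodd]; exact hm)]
      linarith [hkey]

private lemma closed_form (n : ℕ) {x : ℝ} (hx : x ∈ Set.Ioo (-2:ℝ) 2) :
    ∑ k ∈ Finset.range n, (if Even (n - 1 - k) then (U ℝ (k : ℤ)).eval (x / 2) else 0) =
      (if Odd n then 2 - 2 * (T ℝ ((n : ℤ) + 1)).eval (x / 2)
        else x - 2 * (T ℝ ((n : ℤ) + 1)).eval (x / 2)) / (4 - x ^ 2) := by
  set α := Real.arccos (x / 2) with hα
  have hca : Real.cos α = x / 2 := Real.cos_arccos (by linarith [hx.1]) (by linarith [hx.2])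
  have hαpi : α < π := lt_of_le_of_ne (Real.arccos_le_pi _)
    fun h => by have := Real.arccos_eq_pi.1 h; linarith [hx.1]
  have hsa : 0 < Real.sin α :=
    Real.sin_pos_of_pos_of_lt_pi (Real.arccos_pos.2 (by linarith [hx.2])) hαpi
  have h4 : 4 - x ^ 2 = 4 * Real.sin α ^ 2 := by
    have h5 := Real.sin_sq_add_cos_sq α
    have : Real.cos α ^ 2 = x ^ 2 / 4 := by rw [hca]; ring
    nlinarith
  have key := closed_trig α n
  have e1 : ∀ k : ℕ, Real.sin (((k : ℝ) + 1) * α) = (U ℝ (k : ℤ)).eval (x / 2) * Real.sin α := by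
    intro k
    have h := U_real_cos α (k : ℤ)
    rw [hca] at h
    push_cast at h
    exact h.symm
  have eT : Real.cos (((n : ℝ) + 1) * α) = (T ℝ ((n : ℤ) + 1)).eval (x / 2) := by
    have h := T_real_cos α ((n : ℤ) + 1)
    rw [hca] at h
    push_cast at h
    exact h.symm
  rw [Finset.sum_congr rfl (fun k _ => by rw [e1 k]), eT] at key
  have hsum : ∑ k ∈ Finset.range n,
      (if Even (n - 1 - k) then (U ℝ (k : ℤ)).eval (x / 2) * Real.sin α else 0) =
      (∑ k ∈ Finset.range n,
        if Even (n - 1 - k) then (U ℝ (k : ℤ)).eval (x / 2) else 0) * Real.sin α := by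
    rw [Finset.sum_mul]
    exact Finset.sum_congr rfl fun k _ => by split_ifs <;> ring
  rw [hsum] at key
  rw [eq_div_iff (by rw [h4]; positivity)]
  rw [h4]
  by_cases hn : Odd n
  · rw [if_pos hn] at key ⊢
    nlinarith [key]
  · rw [if_neg hn] at key ⊢
    rw [show 2 * Real.cos α = x by rw [hca]; ring] at key
    nlinarith [key]

theorem calU_chebyshev_U (n : ℕ) (x : ℝ) (hx : x ∈ Set.Ioo (-2 : ℝ) 2) :
    ∫ y, ((U ℝ n).eval (x / 2) - (U ℝ n).eval (y / 2)) / (x - y) ∂arcsineLaw =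
      if Odd n then (2 - 2 * (T ℝ ((n : ℤ) + 1)).eval (x / 2)) / (4 - x ^ 2)
      else (x - 2 * (T ℝ ((n : ℤ) + 1)).eval (x / 2)) / (4 - x ^ 2) := by
  obtain ⟨hx1, hx2⟩ := hx
  set g : ℝ → ℝ := fun y => ∑ k ∈ Finset.range n,
    (U ℝ (k : ℤ)).eval (x / 2) * (U ℝ ((n : ℤ) - 1 - (k : ℤ))).eval (y / 2) with hg
  have habs : arcsineLaw ≪ (volume : Measure ℝ) :=
    (withDensity_absolutelyContinuous _ _).trans
      (Measure.absolutelyContinuous_of_le Measure.restrict_le_self)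
  have hres : arcsineLaw ≪ volume.restrict (Set.Icc (-2 : ℝ) 2) :=
    withDensity_absolutelyContinuous _ _
  have hIcc : ∀ᵐ y ∂arcsineLaw, y ∈ Set.Icc (-2 : ℝ) 2 :=
    hres.ae_le (ae_restrict_mem measurableSet_Icc)
  have hsing : ∀ c : ℝ, ∀ᵐ y ∂arcsineLaw, y ≠ c := by
    intro c
    refine ae_iff.2 ?_
    have hset : {y : ℝ | ¬ y ≠ c} = {c} := by ext; simp
    rw [hset]
    exact habs Real.volume_singleton
  have hae : (fun y => ((U ℝ n).eval (x / 2) - (U ℝ n).eval (y / 2)) / (x - y))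
      =ᵐ[arcsineLaw] g := by
    filter_upwards [hIcc, hsing x, hsing (-2), hsing 2] with y hy hyx hym2 hyp2
    have hyo1 : -2 < y := lt_of_le_of_ne hy.1 (Ne.symm hym2)
    have hyo2 : y < 2 := lt_of_le_of_ne hy.2 hyp2
    have hdd := div_diff n (a := x / 2) (b := y / 2)
      ⟨by linarith, by linarith⟩ ⟨by linarith, by linarith⟩
    have hxy : x - y ≠ 0 := sub_ne_zero.2 (Ne.symm hyx)
    show ((U ℝ (n : ℤ)).eval (x / 2) - (U ℝ (n : ℤ)).eval (y / 2)) / (x - y) = g y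
    simp only [hg]
    rw [hdd]
    field_simp
  rw [integral_congr_ae hae, arcsine_transfer g]
  have hsimp : Set.EqOn (fun θ : ℝ => (1 / π) * g (2 * Real.cos θ))
      (fun θ : ℝ => ∑ k ∈ Finset.range n,
        ((1 / π) * (U ℝ (k : ℤ)).eval (x / 2)) * (U ℝ ((n : ℤ) - 1 - (k : ℤ))).eval (Real.cos θ))
      (Set.uIcc 0 π) := by
    intro θ _
    simp only [hg]
    rw [Finset.mul_sum]
    refine Finset.sum_congr rfl fun k _ => ?_
    rw [show 2 * Real.cos θ / 2 = Real.cos θ by ring]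
    ring
  have hint : ∀ k ∈ Finset.range n, IntervalIntegrable (fun θ : ℝ =>
      ((1 / π) * (U ℝ (k : ℤ)).eval (x / 2)) * (U ℝ ((n : ℤ) - 1 - (k : ℤ))).eval (Real.cos θ))
      volume 0 π := by
    intro k _
    apply Continuous.intervalIntegrable
    exact continuous_const.mul ((Polynomial.continuous _).comp Real.continuous_cos)
  rw [intervalIntegral.integral_congr hsimp, intervalIntegral.integral_finset_sum hint]
  have hterm : ∀ k ∈ Finset.range n,
      ∫ θ in (0:ℝ)..π, ((1 / π) * (U ℝ (k : ℤ)).eval (x / 2)) *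
          (U ℝ ((n : ℤ) - 1 - (k : ℤ))).eval (Real.cos θ) =
      if Even (n - 1 - k) then (U ℝ (k : ℤ)).eval (x / 2) else 0 := by
    intro k hk
    have hk' := Finset.mem_range.1 hk
    have hidx : (n : ℤ) - 1 - (k : ℤ) = ((n - 1 - k : ℕ) : ℤ) := by omega
    rw [intervalIntegral.integral_const_mul, hidx, U_moment (n - 1 - k)]
    split_ifs
    · field_simp
    · ring
  rw [Finset.sum_congr rfl hterm, closed_form n ⟨hx1, hx2⟩]
  split_ifs <;> rfl
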